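/- Let k ≥ 1 be an integer, let β ≥ 1 and 0 < ε < k be reals with βk > 1, and let F₀ > 0. Then there exists a finite set 𝓡 of k-tuples of positive reals with |𝓡| ≤ (⌈log_{1+ε}(βk)⌉+1)·(⌈log_{1+ε}(k/ε)⌉+1)^{k−1} such that: for every tuple (r₁, …, r_k) of positive reals with r₁ ≥ r₂ ≥ … ≥ r_k, with F₀/β ≤ r₁ ≤ k·F₀, and with r_j ≥ (ε/k)·r₁ for all j, there exists a tuple (r̃₁, …, r̃_k) ∈ 𝓡 satisfying r_j ≤ r̃_j ≤ (1+ε)·r_j for all j ∈ {1, …, k}. -/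

import Mathlib

lemma aux_le_pow {q x : ℝ} (hq : 1 < q) (hx : 0 < x) {a : ℕ}
    (h : Real.logb q x ≤ a) : x ≤ q ^ a := by
  have h0 : 0 < q := by linarith
  calc x = q ^ Real.logb q x := (Real.rpow_logb h0 (by linarith) hx).symm
    _ ≤ q ^ (a : ℝ) := Real.rpow_le_rpow_of_exponent_le hq.le h
    _ = q ^ a := Real.rpow_natCast q a

lemma aux_pow_le {q x : ℝ} (hq : 1 < q) (hx : 0 < x) {a : ℕ}
    (h : (a : ℝ) ≤ Real.logb q x) : q ^ a ≤ x := by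
  have h0 : 0 < q := by linarith
  calc q ^ a = q ^ (a : ℝ) := (Real.rpow_natCast q a).symm
    _ ≤ q ^ Real.logb q x := Real.rpow_le_rpow_of_exponent_le hq.le h
    _ = x := Real.rpow_logb h0 (by linarith) hx

/-- existence of a small set `𝓡` of candidate radius profiles (tuples of
positive reals) of cardinality at most
`(⌈log_{1+ε}(βk)⌉+1)·(⌈log_{1+ε}(k/ε)⌉+1)^{k−1}` such that every decreasingly sorted
tuple of positive radii with `F₀/β ≤ r₁ ≤ k·F₀` and `r_j ≥ (ε/k)·r₁` for all `j`
admits a near-optimal radius profile in `𝓡`, i.e. a member `f` with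
`r_j ≤ f_j ≤ (1+ε)·r_j` for every coordinate `j`. -/
theorem stmt3 (k : ℕ) (hk : 0 < k) (β ε F₀ : ℝ) (hβ : 1 ≤ β) (hε : 0 < ε)
    (hεk : ε < (k : ℝ)) (hβk : 1 < β * (k : ℝ)) (hF₀ : 0 < F₀) :
    ∃ 𝓡 : Finset (Fin k → ℝ),
      𝓡.card ≤ (⌈Real.logb (1 + ε) (β * (k : ℝ))⌉₊ + 1) *
          (⌈Real.logb (1 + ε) ((k : ℝ) / ε)⌉₊ + 1) ^ (k - 1) ∧
      (∀ f ∈ 𝓡, ∀ j : Fin k, 0 < f j) ∧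
      ∀ r : Fin k → ℝ, (∀ j, 0 < r j) →
        (∀ i j : Fin k, i ≤ j → r j ≤ r i) →
        F₀ / β ≤ r ⟨0, hk⟩ → r ⟨0, hk⟩ ≤ (k : ℝ) * F₀ →
        (∀ j, ε / (k : ℝ) * r ⟨0, hk⟩ ≤ r j) →
        ∃ f ∈ 𝓡, ∀ j : Fin k, r j ≤ f j ∧ f j ≤ (1 + ε) * r j := by
  obtain ⟨n, rfl⟩ : ∃ n, k = n + 1 := ⟨k - 1, (Nat.succ_pred_eq_of_pos hk).symm⟩
  set q : ℝ := 1 + ε with hqdef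
  have hq : 1 < q := by simp only [hqdef]; linarith
  have hq0 : (0:ℝ) < q := by linarith
  have hβ0 : (0:ℝ) < β := by linarith
  have hk0 : (0:ℝ) < ((n+1 : ℕ) : ℝ) := by positivity
  set A : ℕ := ⌈Real.logb q (β * ((n+1 : ℕ) : ℝ))⌉₊ with hAdef
  set B : ℕ := ⌈Real.logb q (((n+1 : ℕ) : ℝ) / ε)⌉₊ with hBdef
  set g : ℕ × (Fin (n+1) → ℕ) → (Fin (n+1) → ℝ) :=
    fun p j => F₀ / β * q ^ p.1 / q ^ (p.2 j) with hgdef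
  set T : Fin (n+1) → Finset ℕ :=
    fun j => if j = 0 then {0} else Finset.range (B+1) with hTdef
  set S : Finset (ℕ × (Fin (n+1) → ℕ)) :=
    (Finset.range (A+1)) ×ˢ Fintype.piFinset T with hSdef
  refine ⟨S.image g, ?_, ?_, ?_⟩
  · calc (S.image g).card ≤ S.card := Finset.card_image_le
      _ = (A+1) * ∏ j, (T j).card := by
          rw [hSdef, Finset.card_product, Finset.card_range, Fintype.card_piFinset]
      _ = (A+1) * (B+1) ^ n := by
          congr 1
          rw [Fin.prod_univ_succ]
          simp [hTdef, Fin.succ_ne_zero]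
      _ = (A+1) * (B+1) ^ (n + 1 - 1) := by norm_num
  · intro f hf j
    simp only [Finset.mem_image] at hf
    obtain ⟨p, _, rfl⟩ := hf
    have : (0:ℝ) < F₀ / β := by positivity
    positivity
  · intro r hr hmono hr1 hr2 hrj
    have h0eq : (⟨0, hk⟩ : Fin (n+1)) = 0 := rfl
    rw [h0eq] at hr1 hr2 hrj
    set r0 := r 0 with hr0def
    have hr0pos : 0 < r0 := hr 0
    have hF₀β : 0 < F₀ / β := by positivity
    set t : ℝ := Real.logb q (r0 / (F₀ / β)) with htdef
    set a : ℕ := ⌈t⌉₊ with hadef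
    have hrat1 : 1 ≤ r0 / (F₀ / β) := (one_le_div hF₀β).mpr hr1
    have hratpos : 0 < r0 / (F₀ / β) := by linarith
    have ht0 : 0 ≤ t := Real.logb_nonneg hq hrat1
    set f0 : ℝ := F₀ / β * q ^ a with hf0def
    have hf0pos : 0 < f0 := by positivity
    have hf0ge : r0 ≤ f0 := by
      have h1 := aux_le_pow hq hratpos (a := a) (Nat.le_ceil t)
      rw [div_le_iff₀ hF₀β] at h1
      calc r0 ≤ q ^ a * (F₀ / β) := h1
        _ = f0 := by rw [hf0def]; ring
    have hf0le : f0 ≤ q * r0 := by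
      have hceil : (a : ℝ) ≤ t + 1 := (Nat.ceil_lt_add_one ht0).le
      have h1 : (q:ℝ) ^ a ≤ q ^ (t + 1 : ℝ) := by
        calc (q:ℝ) ^ a = q ^ (a : ℝ) := (Real.rpow_natCast q a).symm
          _ ≤ q ^ (t + 1 : ℝ) := Real.rpow_le_rpow_of_exponent_le hq.le hceil
      have heq : q ^ (t + 1 : ℝ) = (r0 / (F₀ / β)) * q := by
        rw [Real.rpow_add hq0, Real.rpow_one, htdef,
          Real.rpow_logb hq0 (by linarith) hratpos]
      rw [heq] at h1
      calc f0 = F₀ / β * q ^ a := rfl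
        _ ≤ F₀ / β * ((r0 / (F₀ / β)) * q) := by
            apply mul_le_mul_of_nonneg_left h1 hF₀β.le
        _ = q * r0 := by field_simp
    have haA : a ≤ A := by
      apply Nat.ceil_le_ceil
      apply Real.logb_le_logb_of_le hq hratpos
      rw [div_le_iff₀ hF₀β]
      calc r0 ≤ ((n+1 : ℕ) : ℝ) * F₀ := hr2
        _ = β * ((n+1:ℕ) : ℝ) * (F₀ / β) := by field_simp
    set b : Fin (n+1) → ℕ :=
      fun j => if j = 0 then 0 else min ⌊Real.logb q (f0 / r j)⌋₊ B with hbdef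
    refine ⟨g (a, b), Finset.mem_image_of_mem g ?_, ?_⟩
    · rw [hSdef, Finset.mem_product]
      constructor
      · exact Finset.mem_range.mpr (Nat.lt_succ_of_le haA)
      · rw [Fintype.mem_piFinset]
        intro j
        by_cases hj : j = 0
        · simp [hTdef, hbdef, hj]
        · simp [hTdef, hbdef, hj, Nat.lt_succ_of_le, min_le_right]
    · intro j
      by_cases hj : j = 0
      · subst hj
        have hgj : g (a, b) 0 = f0 := by simp [hgdef, hbdef, hf0def]
        rw [hgj]
        exact ⟨hf0ge, hf0le⟩
      · have hrjpos : 0 < r j := hr j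
        have hrj0 : r j ≤ r0 := hmono 0 j (Fin.zero_le j)
        set s : ℝ := Real.logb q (f0 / r j) with hsdef
        have hratpos' : 0 < f0 / r j := by positivity
        have hrat1' : 1 ≤ f0 / r j := (one_le_div hrjpos).mpr (le_trans hrj0 hf0ge)
        have hs0 : 0 ≤ s := Real.logb_nonneg hq hrat1'
        have hgj : g (a, b) j = f0 / q ^ (b j) := by simp [hgdef, hf0def]
        have hbj : b j = min ⌊s⌋₊ B := by simp [hbdef, hj, hsdef]
        have hbjle : (b j : ℝ) ≤ s := by
          rw [hbj]
          calc ((min ⌊s⌋₊ B : ℕ) : ℝ) ≤ (⌊s⌋₊ : ℝ) := Nat.cast_le.mpr (min_le_left _ _)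
            _ ≤ s := Nat.floor_le hs0
        have hlow : (q:ℝ) ^ (b j) ≤ f0 / r j := aux_pow_le hq hratpos' hbjle
        have hsB : s ≤ (B:ℝ) + 1 := by
          have hratle : f0 / r j ≤ q * (((n+1:ℕ):ℝ) / ε) := by
            rw [div_le_iff₀ hrjpos]
            have h2 : ε / ((n+1:ℕ):ℝ) * r0 ≤ r j := hrj j
            have hq' : (0:ℝ) < q * (((n+1:ℕ):ℝ)/ε) := by positivity
            calc f0 ≤ q * r0 := hf0le
              _ = q * (((n+1:ℕ):ℝ)/ε) * (ε / ((n+1:ℕ):ℝ) * r0) := by field_simp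
              _ ≤ q * (((n+1:ℕ):ℝ)/ε) * r j := by nlinarith
          calc s ≤ Real.logb q (q * (((n+1:ℕ):ℝ)/ε)) :=
                Real.logb_le_logb_of_le hq hratpos' hratle
            _ = 1 + Real.logb q (((n+1:ℕ):ℝ)/ε) := by
                rw [Real.logb_mul (by positivity) (by positivity), Real.logb_self_eq_one hq]
            _ ≤ 1 + (B:ℝ) := by linarith [Nat.le_ceil (Real.logb q (((n+1:ℕ):ℝ)/ε))]
            _ = (B:ℝ) + 1 := by ring
        have hbjge : s - 1 ≤ (b j : ℝ) := by
          rw [hbj]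
          rcases le_total (⌊s⌋₊) B with h | h
          · rw [min_eq_left h]; linarith [Nat.sub_one_lt_floor s]
          · rw [min_eq_right h]; linarith
        have hhigh : (f0 / r j) / q ≤ (q:ℝ) ^ (b j) := by
          have h1 : (q:ℝ) ^ ((s - 1 : ℝ)) ≤ q ^ (b j) := by
            calc (q:ℝ) ^ (s-1:ℝ) ≤ q ^ ((b j : ℕ) : ℝ) :=
                  Real.rpow_le_rpow_of_exponent_le hq.le hbjge
              _ = q ^ (b j) := Real.rpow_natCast q _
          have heq : (q:ℝ) ^ (s - 1 : ℝ) = (f0 / r j) / q := by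
            rw [Real.rpow_sub hq0, Real.rpow_one, hsdef,
              Real.rpow_logb hq0 (by linarith) hratpos']
          rw [heq] at h1
          exact h1
        have hqb : (0:ℝ) < q ^ (b j) := pow_pos hq0 _
        rw [hgj]
        constructor
        · rw [le_div_iff₀ hqb]
          calc r j * q ^ (b j) ≤ r j * (f0 / r j) :=
                mul_le_mul_of_nonneg_left hlow hrjpos.le
            _ = f0 := by rw [mul_comm, div_mul_cancel₀ _ hrjpos.ne']
        · rw [div_le_iff₀ hqb]
          rw [div_le_iff₀ hq0, div_le_iff₀ hrjpos] at hhigh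
          calc f0 ≤ q ^ (b j) * q * r j := hhigh
            _ = (1 + ε) * r j * q ^ (b j) := by rw [hqdef]; ring
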